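/- Let λ, μ ∈ ℂ. The Witt-algebra module F_{λ,μ} admits a nondegenerate symmetric invariant bilinear form if and only if λ = 1/2 and 2μ ∈ ℤ. Moreover, when λ = 1/2 and 2μ ∈ ℤ, the bilinear form determined by B(φ_i, φ_j) = 1 if i + j = −2μ − 1 and B(φ_i, φ_j) = 0 otherwise is symmetric, nondegenerate and invariant. -/

import Mathlib

open scoped Classical

noncomputable section

/-- The underlying space of F_{λ,μ}: finitely supported ℤ-indexed families
(coordinates with respect to the basis (φ_i)_{i ∈ ℤ}). -/
abbrev FF := ℤ →₀ ℂ

/-- The basis vector φ_i = t^{μ+i}(dt)^λ. -/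
def phi (i : ℤ) : FF := Finsupp.single i 1

/-- The action of the Witt-algebra basis element e_n = t^{n+1} d/dt on F_{λ,μ}:
e_n·φ_i = (μ + i + λ(n+1)) φ_{i+n}. -/
def wittE (lam mu : ℂ) (n : ℤ) : Module.End ℂ FF :=
  Finsupp.lsum ℂ (fun i : ℤ =>
    (mu + (i : ℂ) + lam * ((n : ℂ) + 1)) • Finsupp.lsingle (i + n))

/-- Invariance of a bilinear form: B(e_n·u, v) + B(u, e_n·v) = 0 for all n. -/
def IsWittInvariant (lam mu : ℂ) (B : FF →ₗ[ℂ] FF →ₗ[ℂ] ℂ) : Prop :=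
  ∀ (n : ℤ) (u v : FF), B (wittE lam mu n u) v + B u (wittE lam mu n v) = 0

/-- The bilinear form determined by B(φ_i, φ_j) = 1 if i + j = −2μ − 1 and 0 otherwise. -/
def Bsym (mu : ℂ) : FF →ₗ[ℂ] FF →ₗ[ℂ] ℂ :=
  Finsupp.lsum ℂ (fun i : ℤ =>
    LinearMap.toSpanSingleton ℂ (FF →ₗ[ℂ] ℂ)
      (Finsupp.lsum ℂ (fun j : ℤ =>
        (if ((i + j : ℤ) : ℂ) = -2*mu - 1 then (1 : ℂ) else 0) •
          (LinearMap.id : ℂ →ₗ[ℂ] ℂ))))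

lemma wittE_phi (lam mu : ℂ) (n i : ℤ) :
    wittE lam mu n (phi i) = (mu + (i:ℂ) + lam * ((n:ℂ)+1)) • phi (i+n) := by
  rw [wittE, phi, Finsupp.lsum_single, phi]
  simp only [LinearMap.smul_apply, Finsupp.lsingle_apply]

lemma Bsym_phi (mu : ℂ) (i j : ℤ) :
    Bsym mu (phi i) (phi j) = if ((i + j : ℤ) : ℂ) = -2*mu - 1 then 1 else 0 := by
  rw [Bsym, phi, phi, Finsupp.lsum_single, LinearMap.toSpanSingleton_apply_one, Finsupp.lsum_single]
  split <;> simp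

lemma single_eq_smul_phi (i : ℤ) (x : ℂ) : (Finsupp.single i x : FF) = x • phi i := by
  rw [phi, Finsupp.smul_single, smul_eq_mul, mul_one]

lemma phi_apply (i j : ℤ) : (phi i) j = if i = j then 1 else 0 := Finsupp.single_apply

lemma phi_ne_zero (i : ℤ) : phi i ≠ 0 := by
  rw [phi]; intro h; exact one_ne_zero (Finsupp.single_eq_zero.mp h)

lemma cond_iff (mu : ℂ) (k : ℤ) (h : 2*mu = (k:ℂ)) (m : ℤ) :
    (((m:ℤ):ℂ) = -2*mu - 1) ↔ m = -k-1 := by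
  have h2 : (-2*mu - 1 : ℂ) = ((-k-1:ℤ):ℂ) := by push_cast; linear_combination -h
  rw [h2, Int.cast_inj]

lemma Bsym_apply_phi (mu : ℂ) (k : ℤ) (h : 2*mu = (k:ℂ)) (u : FF) (j : ℤ) :
    Bsym mu u (phi j) = u (-k-1-j) := by
  induction u using Finsupp.induction_linear with
  | zero => simp
  | add f g hf hg => rw [map_add, LinearMap.add_apply, hf, hg, Finsupp.add_apply]
  | single a x =>
    rw [single_eq_smul_phi, map_smul, LinearMap.smul_apply, Bsym_phi, smul_eq_mul,
      Finsupp.smul_apply, phi_apply, smul_eq_mul]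
    simp only [cond_iff mu k h]
    by_cases hc : a + j = -k-1
    · have h1 : a = -k-1-j := by omega
      simp [hc, h1]
    · have h1 : ¬ (a = -k-1-j) := by omega
      simp [hc, h1]

lemma Bsym_symm (mu : ℂ) (u v : FF) : Bsym mu u v = Bsym mu v u := by
  have h : Bsym mu = (Bsym mu).flip := by
    refine Finsupp.lhom_ext fun i x => Finsupp.lhom_ext fun j y => ?_
    rw [LinearMap.flip_apply]
    simp only [single_eq_smul_phi, map_smul, LinearMap.smul_apply, smul_eq_mul, Bsym_phi]
    rw [add_comm j i]
    ring
  conv_lhs => rw [h]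
  rfl

lemma inv_of_basis (lam mu : ℂ) (B : FF →ₗ[ℂ] FF →ₗ[ℂ] ℂ)
    (h : ∀ (n i j : ℤ), B (wittE lam mu n (phi i)) (phi j)
      + B (phi i) (wittE lam mu n (phi j)) = 0) :
    IsWittInvariant lam mu B := by
  intro n u v
  induction u using Finsupp.induction_linear with
  | zero => simp
  | add f g hf hg =>
    simp only [map_add, LinearMap.add_apply]
    linear_combination hf + hg
  | single a x =>
    induction v using Finsupp.induction_linear with
    | zero => simp
    | add f g hf hg =>
      simp only [map_add, LinearMap.add_apply]
      linear_combination hf + hg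
    | single b y =>
      simp only [single_eq_smul_phi, map_smul, LinearMap.smul_apply, smul_eq_mul]
      linear_combination (x*y) * h n a b

lemma part2 (lam mu : ℂ) (hcond : lam = 1/2 ∧ ∃ k : ℤ, 2*mu = (k : ℂ)) :
      (∀ i j : ℤ, Bsym mu (phi i) (phi j)
          = if ((i + j : ℤ) : ℂ) = -2*mu - 1 then 1 else 0) ∧
      (∀ u v, Bsym mu u v = Bsym mu v u) ∧
      (∀ u, (∀ v, Bsym mu u v = 0) → u = 0) ∧
      IsWittInvariant lam mu (Bsym mu) := by
  obtain ⟨hlam, k, hk⟩ := hcond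
  refine ⟨Bsym_phi mu, Bsym_symm mu, ?_, ?_⟩
  · intro u hu
    ext i
    have h1 := Bsym_apply_phi mu k hk u (-k-1-i)
    rw [hu] at h1
    have h2 : -k-1-(-k-1-i) = i := by omega
    rw [h2] at h1
    exact h1.symm
  · apply inv_of_basis
    intro n i j
    rw [wittE_phi, wittE_phi, map_smul, LinearMap.smul_apply, map_smul,
      Bsym_phi, Bsym_phi, smul_eq_mul, smul_eq_mul]
    have hiff : (((i + n + j : ℤ):ℂ) = -2*mu - 1) ↔ (((i + (j + n) : ℤ):ℂ) = -2*mu - 1) := by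
      constructor <;> intro hx <;> · push_cast at hx ⊢; linear_combination hx
    by_cases hc : ((i + (j + n) : ℤ):ℂ) = -2*mu - 1
    · rw [if_pos hc, if_pos (hiff.mpr hc)]
      push_cast at hc
      rw [hlam]
      linear_combination hc
    · rw [if_neg hc, if_neg (fun hx => hc (hiff.mp hx))]
      ring

lemma forward (lam mu : ℂ)
    (hex : ∃ B : FF →ₗ[ℂ] FF →ₗ[ℂ] ℂ,
        (∀ u v, B u v = B v u) ∧
        (∀ u, (∀ v, B u v = 0) → u = 0) ∧
        IsWittInvariant lam mu B) :
    lam = 1/2 ∧ ∃ k : ℤ, 2*mu = (k : ℂ) := by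
  obtain ⟨B, hsym, hnd, hinv⟩ := hex
  -- basic invariance relation on basis vectors
  have hbE : ∀ n i j : ℤ, (mu + (i:ℂ) + lam*((n:ℂ)+1)) * B (phi (i+n)) (phi j)
      + (mu + (j:ℂ) + lam*((n:ℂ)+1)) * B (phi i) (phi (j+n)) = 0 := by
    intro n i j
    have h := hinv n (phi i) (phi j)
    rw [wittE_phi, wittE_phi, map_smul, LinearMap.smul_apply, map_smul,
      smul_eq_mul, smul_eq_mul] at h
    exact h
  -- every basis vector pairs nontrivially with some basis vector
  have hexj : ∀ i : ℤ, ∃ j : ℤ, B (phi i) (phi j) ≠ 0 := by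
    intro i
    by_contra hcon
    push_neg at hcon
    have hzero : ∀ v, B (phi i) v = 0 := by
      intro v
      induction v using Finsupp.induction_linear with
      | zero => simp
      | add f g hf hg => rw [map_add, hf, hg, add_zero]
      | single a x => rw [single_eq_smul_phi, map_smul, hcon, smul_zero]
    exact phi_ne_zero i (hnd (phi i) hzero)
  -- the n = 0 relation
  have h0 : ∀ i j : ℤ, (2*mu + 2*lam + (i:ℂ) + (j:ℂ)) * B (phi i) (phi j) = 0 := by
    intro i j
    have h := hbE 0 i j
    simp only [Int.cast_zero, add_zero] at h
    linear_combination h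
  obtain ⟨c, hc0⟩ := hexj 0
  have hc : 2*mu + 2*lam + (c:ℂ) = 0 := by
    have h := (mul_eq_zero.mp (h0 0 c)).resolve_right hc0
    push_cast at h
    linear_combination h
  -- vanishing off the antidiagonal
  have hvan : ∀ i j : ℤ, i + j ≠ c → B (phi i) (phi j) = 0 := by
    intro i j hne
    rcases mul_eq_zero.mp (h0 i j) with h | h
    · exfalso
      apply hne
      have hcast : ((i + j : ℤ):ℂ) = ((c:ℤ):ℂ) := by push_cast; linear_combination h - hc
      exact_mod_cast hcast
    · exact h
  -- antidiagonal entries are nonzero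
  have ha : ∀ i : ℤ, B (phi i) (phi (c - i)) ≠ 0 := by
    intro i
    obtain ⟨j, hj⟩ := hexj i
    have hij : i + j = c := by
      by_contra hne
      exact hj (hvan i j hne)
    have hjc : j = c - i := by omega
    rwa [← hjc]
  -- the key relation: mu + i + lam * (c - 2i + 1) = 0 for every i
  have hkey : ∀ i : ℤ, mu + (i:ℂ) + lam * (((c - 2*i : ℤ):ℂ) + 1) = 0 := by
    intro i
    have h := hbE (c - 2*i) i i
    have hia : i + (c - 2*i) = c - i := by omega
    rw [hia, hsym (phi (c - i)) (phi i)] at h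
    have h2 : (2:ℂ) * ((mu + (i:ℂ) + lam*(((c - 2*i : ℤ):ℂ)+1)) * B (phi i) (phi (c - i))) = 0 := by
      linear_combination h
    have h3 := (mul_eq_zero.mp h2).resolve_left two_ne_zero
    exact (mul_eq_zero.mp h3).resolve_right (ha i)
  have e0 := hkey 0
  have e1 := hkey 1
  push_cast at e0 e1
  have hlam : lam = 1/2 := by linear_combination (e0 - e1)/2
  refine ⟨hlam, ⟨-c - 1, ?_⟩⟩
  push_cast
  linear_combination 2*e0 - (2*(c:ℂ) + 2)*hlam

/-- F_{λ,μ} admits a nondegenerate symmetric invariant bilinear form iff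
λ = 1/2 and 2μ ∈ ℤ; and in that case the form B(φ_i,φ_j) = [i+j = −2μ−1] is
symmetric, nondegenerate and invariant. -/
theorem statement_2 (lam mu : ℂ) :
    ((∃ B : FF →ₗ[ℂ] FF →ₗ[ℂ] ℂ,
        (∀ u v, B u v = B v u) ∧
        (∀ u, (∀ v, B u v = 0) → u = 0) ∧
        IsWittInvariant lam mu B) ↔
      (lam = 1/2 ∧ ∃ k : ℤ, 2*mu = (k : ℂ))) ∧
    ((lam = 1/2 ∧ ∃ k : ℤ, 2*mu = (k : ℂ)) →
      (∀ i j : ℤ, Bsym mu (phi i) (phi j)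
          = if ((i + j : ℤ) : ℂ) = -2*mu - 1 then 1 else 0) ∧
      (∀ u v, Bsym mu u v = Bsym mu v u) ∧
      (∀ u, (∀ v, Bsym mu u v = 0) → u = 0) ∧
      IsWittInvariant lam mu (Bsym mu)) := by
  refine ⟨⟨forward lam mu, ?_⟩, part2 lam mu⟩
  intro h
  obtain ⟨p1, p2, p3, p4⟩ := part2 lam mu h
  exact ⟨Bsym mu, p2, p3, p4⟩

end
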